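/- Under-constrained least squares via column sampling: let A ∈ ℝ^{n×d} with n ≤ d and rank(A) = n, thin SVD A = UΣVᵀ, and S ∈ ℝ^{d×r} a sampling matrix such that ‖I_n − VᵀSSᵀV‖₂ ≤ ε ≤ 1/2. Then for any b ∈ ℝⁿ, setting x_opt = A⁺b and x̃_opt = Aᵀ(AS)⁺ᵀ(AS)⁺b, we have ‖x_opt − x̃_opt‖₂ ≤ 2ε‖x_opt‖₂. -/

import Mathlib

open Matrix
open scoped Matrix.Norms.L2Operator

def IsMoorePenrose {m n : ℕ} (A : Matrix (Fin m) (Fin n) ℝ) (Ap : Matrix (Fin n) (Fin m) ℝ) : Prop :=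
  A * Ap * A = A ∧ Ap * A * Ap = Ap ∧ (A * Ap)ᵀ = A * Ap ∧ (Ap * A)ᵀ = Ap * A

theorem mp_unique' {m n : ℕ} {A : Matrix (Fin m) (Fin n) ℝ} {X Y : Matrix (Fin n) (Fin m) ℝ}
    (hX : IsMoorePenrose A X) (hY : IsMoorePenrose A Y) : X = Y := by
  obtain ⟨hX1, hX2, hX3, hX4⟩ := hX
  obtain ⟨hY1, hY2, hY3, hY4⟩ := hY
  have hAXY : A * X = A * Y := by
    calc A * X = (A * Y * A) * X := by rw [hY1]
    _ = (A * Y) * (A * X) := by rw [Matrix.mul_assoc]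
    _ = (A * Y)ᵀ * (A * X)ᵀ := by rw [hY3, hX3]
    _ = (A * X * (A * Y))ᵀ := by simp only [Matrix.transpose_mul, Matrix.mul_assoc]
    _ = (A * X * A * Y)ᵀ := by simp only [Matrix.mul_assoc]
    _ = (A * Y)ᵀ := by rw [hX1]
    _ = A * Y := hY3
  have hXYA : X * A = Y * A := by
    calc X * A = X * (A * Y * A) := by rw [hY1]
    _ = (X * A) * (Y * A) := by simp only [Matrix.mul_assoc]
    _ = (X * A)ᵀ * (Y * A)ᵀ := by rw [hX4, hY4]
    _ = (Y * A * (X * A))ᵀ := by simp only [Matrix.transpose_mul, Matrix.mul_assoc]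
    _ = (Y * (A * X * A))ᵀ := by simp only [Matrix.mul_assoc]
    _ = (Y * A)ᵀ := by rw [hX1]
    _ = Y * A := hY4
  calc X = X * A * X := hX2.symm
  _ = X * (A * Y) := by rw [Matrix.mul_assoc, hAXY]
  _ = (X * A) * Y := by rw [Matrix.mul_assoc]
  _ = Y * A * Y := by rw [hXYA]
  _ = Y := hY2

set_option maxHeartbeats 1000000 in
theorem underconstrained_least_squares {n d r : ℕ} (hnd : n ≤ d)
    (A : Matrix (Fin n) (Fin d) ℝ) (U S : Matrix (Fin n) (Fin n) ℝ)
    (V : Matrix (Fin d) (Fin n) ℝ) (M : Matrix (Fin d) (Fin r) ℝ)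
    (Ap : Matrix (Fin d) (Fin n) ℝ) (ASp : Matrix (Fin r) (Fin n) ℝ)
    (b : Fin n → ℝ) (ε : ℝ) (hε0 : 0 < ε) (hε1 : ε ≤ 1 / 2)
    (hrank : A.rank = n)
    (hSVD : A = U * S * Vᵀ) (hU : Uᵀ * U = 1) (hU' : U * Uᵀ = 1)
    (hV : Vᵀ * V = 1) (hS : Invertible S)
    (hAp : IsMoorePenrose A Ap) (hASp : IsMoorePenrose (A * M) ASp)
    (h : ‖(1 : Matrix (Fin n) (Fin n) ℝ) - Vᵀ * M * Mᵀ * V‖ ≤ ε) :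
    Real.sqrt (∑ i, (Ap.mulVec b i - (Aᵀ * ASpᵀ * ASp).mulVec b i) ^ 2) ≤
      2 * ε * Real.sqrt (∑ i, (Ap.mulVec b i) ^ 2) := by
  set W : Matrix (Fin n) (Fin r) ℝ := Vᵀ * M with hW
  set E : Matrix (Fin n) (Fin n) ℝ := W * Wᵀ with hE
  -- rewrite h
  have hEnorm : ‖(1 : Matrix (Fin n) (Fin n) ℝ) - E‖ ≤ ε := by
    have : Vᵀ * M * Mᵀ * V = E := by
      rw [hE, hW, Matrix.transpose_mul, Matrix.transpose_transpose, Matrix.mul_assoc]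
    rwa [this] at h
  -- E is invertible
  have hEu : IsUnit E := by
    have hlt : ‖(1 : Matrix (Fin n) (Fin n) ℝ) - E‖ < 1 := lt_of_le_of_lt hEnorm (by linarith)
    have := Units.isUnit (Units.oneSub ((1 : Matrix (Fin n) (Fin n) ℝ) - E) hlt)
    simpa using this
  obtain ⟨F, hFE, hEF⟩ := hEu.nonempty_invertible
  -- E symmetric, hence F symmetric
  have hEsymm : Eᵀ = E := by rw [hE, Matrix.transpose_mul, Matrix.transpose_transpose]
  have hEFt : E * Fᵀ = 1 := by
    rw [← hEsymm, ← Matrix.transpose_mul, hFE, Matrix.transpose_one]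
  have hFsymm : Fᵀ = F := by
    calc Fᵀ = (F * E) * Fᵀ := by rw [hFE, Matrix.one_mul]
    _ = F * (E * Fᵀ) := Matrix.mul_assoc _ _ _
    _ = F := by rw [hEFt, Matrix.mul_one]
  -- cancellation lemmas
  have hVc : ∀ (k : ℕ) (X : Matrix (Fin n) (Fin k) ℝ), Vᵀ * (V * X) = X := by
    intro k X; rw [← Matrix.mul_assoc, hV, Matrix.one_mul]
  have hUc : ∀ (k : ℕ) (X : Matrix (Fin n) (Fin k) ℝ), Uᵀ * (U * X) = X := by
    intro k X; rw [← Matrix.mul_assoc, hU, Matrix.one_mul]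
  have hSc : ∀ (k : ℕ) (X : Matrix (Fin n) (Fin k) ℝ), S * (⅟S * X) = X := by
    intro k X; rw [← Matrix.mul_assoc, mul_invOf_self, Matrix.one_mul]
  have hS'c : ∀ (k : ℕ) (X : Matrix (Fin n) (Fin k) ℝ), ⅟S * (S * X) = X := by
    intro k X; rw [← Matrix.mul_assoc, invOf_mul_self, Matrix.one_mul]
  have hStc : ∀ (k : ℕ) (X : Matrix (Fin n) (Fin k) ℝ), Sᵀ * ((⅟S)ᵀ * X) = X := by
    intro k X
    rw [← Matrix.mul_assoc, ← Matrix.transpose_mul, invOf_mul_self, Matrix.transpose_one,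
      Matrix.one_mul]
  have hWc : ∀ (k : ℕ) (X : Matrix (Fin n) (Fin k) ℝ), W * (Wᵀ * X) = E * X := by
    intro k X; rw [← Matrix.mul_assoc, hE]
  have hEc : ∀ (k : ℕ) (X : Matrix (Fin n) (Fin k) ℝ), E * (F * X) = X := by
    intro k X; rw [← Matrix.mul_assoc, hEF, Matrix.one_mul]
  have hE'c : ∀ (k : ℕ) (X : Matrix (Fin n) (Fin k) ℝ), F * (E * X) = X := by
    intro k X; rw [← Matrix.mul_assoc, hFE, Matrix.one_mul]
  -- the explicit pseudoinverse of A
  set P1 : Matrix (Fin d) (Fin n) ℝ := V * (⅟S * Uᵀ) with hP1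
  have hAP1 : A * P1 = 1 := by
    rw [hSVD, hP1]
    simp only [Matrix.mul_assoc, hVc, hSc, hU']
  have hP1A : P1 * A = V * Vᵀ := by
    rw [hSVD, hP1]
    simp only [Matrix.mul_assoc, hUc, hS'c]
  have hApP1 : Ap = P1 := by
    refine mp_unique' hAp ⟨?_, ?_, ?_, ?_⟩
    · rw [Matrix.mul_assoc, ← Matrix.mul_assoc A P1 A, hAP1, Matrix.one_mul]
    · rw [hP1A, hP1]; simp only [Matrix.mul_assoc, hVc]
    · rw [hAP1, Matrix.transpose_one]
    · rw [hP1A, Matrix.transpose_mul, Matrix.transpose_transpose]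
  -- A * M
  have hAM : A * M = U * (S * W) := by
    rw [hSVD, hW]; simp only [Matrix.mul_assoc]
  -- the explicit pseudoinverse of A * M
  set P2 : Matrix (Fin r) (Fin n) ℝ := Wᵀ * (F * (⅟S * Uᵀ)) with hP2
  have hAMP2 : (A * M) * P2 = 1 := by
    rw [hAM, hP2]
    simp only [Matrix.mul_assoc, hWc, hEc, hSc, hU']
  have hP2AM : P2 * (A * M) = Wᵀ * (F * W) := by
    rw [hAM, hP2]
    simp only [Matrix.mul_assoc, hUc, hS'c]
  have hASpP2 : ASp = P2 := by
    refine mp_unique' hASp ⟨?_, ?_, ?_, ?_⟩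
    · rw [Matrix.mul_assoc, ← Matrix.mul_assoc (A * M) P2 (A * M), hAMP2, Matrix.one_mul]
    · rw [hP2AM, hP2]; simp only [Matrix.mul_assoc, hWc, hE'c]
    · rw [hAMP2, Matrix.transpose_one]
    · rw [hP2AM]
      simp only [Matrix.transpose_mul, Matrix.transpose_transpose, hFsymm, Matrix.mul_assoc]
  -- the key matrix identity
  have hKey : Aᵀ * ASpᵀ * ASp = V * (F * (⅟S * Uᵀ)) := by
    rw [hASpP2, hSVD, hP2]
    simp only [Matrix.transpose_mul, Matrix.transpose_transpose, hFsymm]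
    simp only [Matrix.mul_assoc, hUc, hStc, hWc, hE'c]
  -- the difference
  have hDiff : Ap - Aᵀ * ASpᵀ * ASp = V * ((1 - F) * (⅟S * Uᵀ)) := by
    rw [hApP1, hKey, hP1, ← Matrix.mul_sub, Matrix.sub_mul, Matrix.one_mul]
  -- vector computations
  set y : Fin n → ℝ := (⅟S * Uᵀ) *ᵥ b with hy
  have hApb : Ap *ᵥ b = V *ᵥ y := by
    rw [hApP1, hP1, hy, ← Matrix.mulVec_mulVec]
  have hDiffb : Ap *ᵥ b - (Aᵀ * ASpᵀ * ASp) *ᵥ b = V *ᵥ ((1 - F) *ᵥ y) := by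
    rw [← Matrix.sub_mulVec, hDiff, hy, ← Matrix.mulVec_mulVec, ← Matrix.mulVec_mulVec]
  -- norms
  have hsq : ∀ (k : ℕ) (v : Fin k → ℝ), ∑ i, v i ^ 2 = v ⬝ᵥ v := by
    intro k v; simp [dotProduct, sq]
  have hVnorm : ∀ z : Fin n → ℝ, ∑ i, (V *ᵥ z) i ^ 2 = ∑ i, z i ^ 2 := by
    intro z
    rw [hsq, hsq, Matrix.dotProduct_mulVec]
    have : (V *ᵥ z) ᵥ* V = z := by
      rw [show V = (Vᵀ)ᵀ by simp, Matrix.vecMul_transpose, Matrix.transpose_transpose,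
        Matrix.mulVec_mulVec, hV, Matrix.one_mulVec]
    rw [this]
  have hnorm_eq : ∀ (k : ℕ) (v : Fin k → ℝ),
      Real.sqrt (∑ i, v i ^ 2) = ‖(EuclideanSpace.equiv (Fin k) ℝ).symm v‖ := by
    intro k v
    rw [EuclideanSpace.norm_eq]
    congr 1
    simp [sq_abs]
  -- bound on ‖1 - F‖
  have hone : ‖(1 : Matrix (Fin n) (Fin n) ℝ)‖ ≤ 1 := by
    have h1 := Matrix.l2_opNorm_conjTranspose_mul_self (1 : Matrix (Fin n) (Fin n) ℝ)
    rw [Matrix.conjTranspose_one, mul_one] at h1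
    nlinarith [norm_nonneg (1 : Matrix (Fin n) (Fin n) ℝ)]
  have hFbound : ‖(1 : Matrix (Fin n) (Fin n) ℝ) - F‖ ≤ 2 * ε := by
    have hfac : (1 : Matrix (Fin n) (Fin n) ℝ) - F = (E - 1) * F := by
      rw [Matrix.sub_mul, Matrix.one_mul, hEF]
    have h1 : ‖(1 : Matrix (Fin n) (Fin n) ℝ) - F‖ ≤ ‖E - 1‖ * ‖F‖ := by
      rw [hfac]; exact norm_mul_le _ _
    have h2 : ‖E - (1 : Matrix (Fin n) (Fin n) ℝ)‖ ≤ ε := by rwa [norm_sub_rev] at hEnorm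
    have h3 : ‖F‖ ≤ ‖(1 : Matrix (Fin n) (Fin n) ℝ) - F‖ + 1 := by
      calc ‖F‖ = ‖(1 : Matrix (Fin n) (Fin n) ℝ) - ((1 : Matrix (Fin n) (Fin n) ℝ) - F)‖ := by
            rw [sub_sub_cancel]
      _ ≤ ‖(1 : Matrix (Fin n) (Fin n) ℝ)‖ + ‖(1 : Matrix (Fin n) (Fin n) ℝ) - F‖ :=
            norm_sub_le _ _
      _ ≤ ‖(1 : Matrix (Fin n) (Fin n) ℝ) - F‖ + 1 := by linarith
    have hFnn : (0:ℝ) ≤ ‖F‖ := norm_nonneg _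
    nlinarith [norm_nonneg ((1 : Matrix (Fin n) (Fin n) ℝ) - F)]
  -- finish
  have hLHS : Real.sqrt (∑ i, (Ap.mulVec b i - (Aᵀ * ASpᵀ * ASp).mulVec b i) ^ 2)
      = Real.sqrt (∑ i, ((1 - F) *ᵥ y) i ^ 2) := by
    have : ∀ i, Ap.mulVec b i - (Aᵀ * ASpᵀ * ASp).mulVec b i
        = (V *ᵥ ((1 - F) *ᵥ y)) i := by
      intro i; rw [← hDiffb]; simp [Matrix.mulVec, Pi.sub_apply]
    simp only [this]
    rw [hVnorm]
  have hRHS : Real.sqrt (∑ i, (Ap.mulVec b i) ^ 2) = Real.sqrt (∑ i, y i ^ 2) := by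
    rw [hApb, hVnorm]
  rw [hLHS, hRHS, hnorm_eq, hnorm_eq]
  calc ‖(EuclideanSpace.equiv (Fin n) ℝ).symm ((1 - F) *ᵥ y)‖
      ≤ ‖(1 : Matrix (Fin n) (Fin n) ℝ) - F‖ * ‖(EuclideanSpace.equiv (Fin n) ℝ).symm y‖ :=
        Matrix.l2_opNorm_mulVec (1 - F) ((EuclideanSpace.equiv (Fin n) ℝ).symm y)
  _ ≤ 2 * ε * ‖(EuclideanSpace.equiv (Fin n) ℝ).symm y‖ :=
        mul_le_mul_of_nonneg_right hFbound (norm_nonneg _)
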